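/- (Chain height bounds the ℤ₂-index.) Let A : Fin M → Fin N → ℤ be a partial sign matrix having at least one nonzero entry, and let h(A) be its height. Then there exists a continuous map f : |S(A)| → ℝ^(2·h(A)) such that f(x) ≠ 0 for all x ∈ |S(A)| and f(−x) = −f(x) whenever x and −x both lie in |S(A)|; i.e., there is a ℤ₂-equivariant continuous map |S(A)| → S^{2h(A)−1}, so ind_{ℤ₂}(S(A)) ≤ 2·h(A) − 1. -/

import Mathlib

open scoped Pointwise

/-- The realized simplex of row `i` of the partial sign matrix `A`. -/
noncomputable def rowSimplex {M N : ℕ} (A : Fin M → Fin N → ℤ) (i : Fin M) :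
    Set (Fin N → ℝ) :=
  convexHull ℝ
    ({x | ∃ j, A i j = 1 ∧ x = Pi.single j (1 : ℝ)} ∪
     {x | ∃ j, A i j = -1 ∧ x = -Pi.single j (1 : ℝ)})

/-- The crosspolytope realization `|S(A)|` of the sign complex of `A`. -/
noncomputable def signComplexReal {M N : ℕ} (A : Fin M → Fin N → ℤ) :
    Set (Fin N → ℝ) :=
  ⋃ i, (rowSimplex A i ∪ -(rowSimplex A i))

/-- The intersection family `I(A)`: all nonempty sets expressible as an
intersection of finitely many (at least one) of the sets
`R_i^+ = {j : A i j = 1}` and `R_i^- = {j : A i j = -1}`. -/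
def interFamily {M N : ℕ} (A : Fin M → Fin N → ℤ) : Set (Set (Fin N)) :=
  {S | S.Nonempty ∧ ∃ F : Finset (Fin M × Bool), F.Nonempty ∧
    S = ⋂ p ∈ F, {j | A p.1 j = if p.2 then 1 else -1}}

namespace IdxProof

variable {M N : ℕ}

lemma rowSet_mem_pos (A : Fin M → Fin N → ℤ) (i : Fin M)
    (hne : {j | A i j = 1}.Nonempty) : {j | A i j = 1} ∈ interFamily A := by
  refine ⟨hne, {(i, true)}, Finset.singleton_nonempty _, ?_⟩
  simp

lemma rowSet_mem_neg (A : Fin M → Fin N → ℤ) (i : Fin M)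
    (hne : {j | A i j = -1}.Nonempty) : {j | A i j = -1} ∈ interFamily A := by
  refine ⟨hne, {(i, false)}, Finset.singleton_nonempty _, ?_⟩
  simp

/-- minimal member of `I(A)` containing `P`. -/
noncomputable def mSet (A : Fin M → Fin N → ℤ) (P : Set (Fin N)) : Set (Fin N) :=
  ⋂₀ {S | S ∈ interFamily A ∧ P ⊆ S}

lemma subset_mSet (A : Fin M → Fin N → ℤ) (P : Set (Fin N)) : P ⊆ mSet A P :=
  fun _ hp => Set.mem_sInter.2 fun _ hS => hS.2 hp

lemma mSet_subset (A : Fin M → Fin N → ℤ) {P S : Set (Fin N)}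
    (hS : S ∈ interFamily A) (hPS : P ⊆ S) : mSet A P ⊆ S :=
  Set.sInter_subset_of_mem ⟨hS, hPS⟩

lemma mSet_mono (A : Fin M → Fin N → ℤ) {P Q : Set (Fin N)} (hPQ : P ⊆ Q) :
    mSet A P ⊆ mSet A Q := by
  intro x hx
  exact Set.mem_sInter.2 fun S hS => Set.mem_sInter.1 hx S ⟨hS.1, hPQ.trans hS.2⟩

lemma inter_mem (A : Fin M → Fin N → ℤ) {S T : Set (Fin N)}
    (hS : S ∈ interFamily A) (hT : T ∈ interFamily A) (hST : (S ∩ T).Nonempty) :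
    S ∩ T ∈ interFamily A := by
  obtain ⟨-, F, hF, rfl⟩ := hS
  obtain ⟨-, G, hG, rfl⟩ := hT
  refine ⟨hST, F ∪ G, Finset.Nonempty.mono Finset.subset_union_left hF, ?_⟩
  ext j
  simp only [Set.mem_inter_iff, Set.mem_iInter, Finset.mem_union, Set.mem_setOf_eq]
  constructor
  · rintro ⟨h1, h2⟩ p hp
    rcases hp with hp | hp
    exacts [h1 p hp, h2 p hp]
  · intro hj
    exact ⟨fun p hp => hj p (Or.inl hp), fun p hp => hj p (Or.inr hp)⟩


lemma sInter_mem (A : Fin M → Fin N → ℤ) {C : Set (Set (Fin N))}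
    (hC : C ⊆ interFamily A) (hCne : C.Nonempty) (hne : (⋂₀ C).Nonempty) :
    ⋂₀ C ∈ interFamily A := by
  have hfin : C.Finite := Set.toFinite C
  revert hC hCne hne
  refine Set.Finite.induction_on C hfin (fun _ h _ => absurd h (by simp)) ?_
  intro a s _ _ ih hC hCne hne
  rw [Set.sInter_insert] at hne ⊢
  rcases s.eq_empty_or_nonempty with rfl | hsne
  · simpa using hC (Set.mem_insert a ∅)
  · have hsub : s ⊆ interFamily A := fun x hx => hC (Set.mem_insert_of_mem a hx)
    have h2 : (⋂₀ s).Nonempty := hne.mono Set.inter_subset_right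
    exact inter_mem A (hC (Set.mem_insert a s)) (ih hsub hsne h2) hne

lemma mSet_mem (A : Fin M → Fin N → ℤ) {P : Set (Fin N)} (hP : P.Nonempty)
    (hex : ∃ S ∈ interFamily A, P ⊆ S) : mSet A P ∈ interFamily A := by
  obtain ⟨S0, hS0, hPS0⟩ := hex
  refine sInter_mem A (fun S hS => hS.1) ⟨S0, hS0, hPS0⟩ ?_
  exact hP.mono (subset_mSet A P)

/-- length of the longest strictly increasing chain in `I(A)` lying above `S`. -/
noncomputable def dAbove (A : Fin M → Fin N → ℤ) (S : Set (Fin N)) : ℕ :=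
  sSup {k | ∃ c : Fin k → Set (Fin N), StrictMono c ∧ (∀ t, c t ∈ interFamily A) ∧
    ∀ t, S ⊆ c t}

section dLemmas

variable (A : Fin M → Fin N → ℤ) {h : ℕ}
variable (hh : IsGreatest
      {k | ∃ c : Fin k → Set (Fin N), StrictMono c ∧ ∀ t, c t ∈ interFamily A} h)

lemma dSet_zero_mem (S : Set (Fin N)) :
    0 ∈ {k | ∃ c : Fin k → Set (Fin N), StrictMono c ∧ (∀ t, c t ∈ interFamily A) ∧
      ∀ t, S ⊆ c t} :=
  ⟨Fin.elim0, fun x => x.elim0, fun x => x.elim0, fun x => x.elim0⟩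

include hh

lemma dSet_bdd (S : Set (Fin N)) :
    ∀ k ∈ {k | ∃ c : Fin k → Set (Fin N), StrictMono c ∧ (∀ t, c t ∈ interFamily A) ∧
      ∀ t, S ⊆ c t}, k ≤ h := by
  rintro k ⟨c, hc1, hc2, -⟩
  exact hh.2 ⟨c, hc1, hc2⟩

lemma dAbove_le (S : Set (Fin N)) : dAbove A S ≤ h :=
  csSup_le ⟨0, dSet_zero_mem A S⟩ (dSet_bdd A hh S)

lemma le_dAbove {S : Set (Fin N)} {k : ℕ}
    (hk : k ∈ {k | ∃ c : Fin k → Set (Fin N), StrictMono c ∧ (∀ t, c t ∈ interFamily A) ∧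
      ∀ t, S ⊆ c t}) : k ≤ dAbove A S :=
  le_csSup ⟨h, dSet_bdd A hh S⟩ hk

lemma one_le_dAbove {S : Set (Fin N)} (hS : S ∈ interFamily A) : 1 ≤ dAbove A S := by
  refine le_dAbove A hh ⟨fun _ => S, Subsingleton.strictMono _, fun _ => hS, fun _ => le_rfl⟩

lemma dAbove_mem (S : Set (Fin N)) :
    dAbove A S ∈ {k | ∃ c : Fin k → Set (Fin N), StrictMono c ∧ (∀ t, c t ∈ interFamily A) ∧
      ∀ t, S ⊆ c t} :=
  Nat.sSup_mem ⟨0, dSet_zero_mem A S⟩ ⟨h, dSet_bdd A hh S⟩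

lemma dAbove_strict {S T : Set (Fin N)} (hS : S ∈ interFamily A)
    (hST : S ⊂ T) : dAbove A T + 1 ≤ dAbove A S := by
  obtain ⟨c, hc1, hc2, hc3⟩ := dAbove_mem A hh T
  refine le_dAbove A hh
    ⟨fun t => if ht : (t : ℕ) = 0 then S else c ⟨t - 1, by omega⟩, ?_, ?_, ?_⟩
  · intro u v huv
    have huv' : (u : ℕ) < (v : ℕ) := huv
    rcases Nat.eq_zero_or_pos (u : ℕ) with hu | hu
    · have hv : (v : ℕ) ≠ 0 := by omega
      dsimp only
      rw [dif_pos hu, dif_neg hv]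
      exact lt_of_lt_of_le (show S < T from hST) (hc3 _)
    · have hu' : (u : ℕ) ≠ 0 := by omega
      have hv' : (v : ℕ) ≠ 0 := by omega
      dsimp only
      rw [dif_neg hu', dif_neg hv']
      exact hc1 (by simp only [Fin.lt_def]; omega)
  · intro t
    dsimp only
    by_cases ht : (t : ℕ) = 0
    · rw [dif_pos ht]; exact hS
    · rw [dif_neg ht]; exact hc2 _
  · intro t
    dsimp only
    by_cases ht : (t : ℕ) = 0
    · rw [dif_pos ht]
    · rw [dif_neg ht]; exact hST.subset.trans (hc3 _)

lemma dAbove_antitone {S T : Set (Fin N)} (hS : S ∈ interFamily A)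
    (hST : S ⊆ T) : dAbove A T ≤ dAbove A S := by
  rcases eq_or_ne S T with rfl | hne
  · exact le_rfl
  · exact le_trans (Nat.le_succ _) (dAbove_strict A hh hS ⟨hST, fun hTS => hne (le_antisymm hST hTS)⟩)

lemma dAbove_inj {S T : Set (Fin N)} (hS : S ∈ interFamily A)
    (hST : S ⊆ T) (hd : dAbove A S = dAbove A T) : S = T := by
  by_contra hne
  have := dAbove_strict A hh hS ⟨hST, fun hTS => hne (le_antisymm hST hTS)⟩
  omega

end dLemmas

/-- faces of the sign complex, as pairs of finsets. -/
def IsFace (A : Fin M → Fin N → ℤ) (P Q : Finset (Fin N)) : Prop :=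
  (P ∪ Q).Nonempty ∧ ∃ i, ((∀ j ∈ P, A i j = 1) ∧ (∀ j ∈ Q, A i j = -1)) ∨
    ((∀ j ∈ P, A i j = -1) ∧ (∀ j ∈ Q, A i j = 1))

lemma IsFace.symm {A : Fin M → Fin N → ℤ} {P Q : Finset (Fin N)}
    (hf : IsFace A P Q) : IsFace A Q P := by
  obtain ⟨hne, i, hi | hi⟩ := hf
  · exact ⟨by rwa [Finset.union_comm], i, Or.inr ⟨hi.2, hi.1⟩⟩
  · exact ⟨by rwa [Finset.union_comm], i, Or.inl ⟨hi.2, hi.1⟩⟩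

lemma IsFace.disj {A : Fin M → Fin N → ℤ} {P Q : Finset (Fin N)}
    (hf : IsFace A P Q) : Disjoint P Q := by
  obtain ⟨-, i, hi | hi⟩ := hf <;>
  · refine Finset.disjoint_left.2 fun j hjP hjQ => ?_
    have h1 := hi.1 j hjP
    have h2 := hi.2 j hjQ
    omega

lemma IsFace.exists_mem {A : Fin M → Fin N → ℤ} {P Q : Finset (Fin N)}
    (hf : IsFace A P Q) (hP : P.Nonempty) : ∃ S ∈ interFamily A, ↑P ⊆ S := by
  obtain ⟨-, i, hi | hi⟩ := hf
  · refine ⟨{j | A i j = 1}, rowSet_mem_pos A i ?_, fun j hj => hi.1 j hj⟩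
    obtain ⟨p, hp⟩ := hP
    exact ⟨p, hi.1 p hp⟩
  · refine ⟨{j | A i j = -1}, rowSet_mem_neg A i ?_, fun j hj => hi.1 j hj⟩
    obtain ⟨p, hp⟩ := hP
    exact ⟨p, hi.1 p hp⟩

/-- the two minimal sets of a face are different. -/
lemma IsFace.mSet_ne {A : Fin M → Fin N → ℤ} {P Q : Finset (Fin N)}
    (hf : IsFace A P Q) (hP : P.Nonempty) (hQ : Q.Nonempty) :
    mSet A ↑P ≠ mSet A ↑Q := by
  obtain ⟨-, i, hi | hi⟩ := hf
  · have h1 : mSet A ↑P ⊆ {j | A i j = 1} :=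
      mSet_subset A (rowSet_mem_pos A i ⟨hP.choose, hi.1 _ hP.choose_spec⟩)
        (fun j hj => hi.1 j hj)
    have h2 : mSet A ↑Q ⊆ {j | A i j = -1} :=
      mSet_subset A (rowSet_mem_neg A i ⟨hQ.choose, hi.2 _ hQ.choose_spec⟩)
        (fun j hj => hi.2 j hj)
    intro heq
    have hp : (hP.choose : Fin N) ∈ mSet A ↑P := subset_mSet A _ (by exact_mod_cast hP.choose_spec)
    have := h1 hp
    have := h2 (heq ▸ hp)
    simp only [Set.mem_setOf_eq] at *
    omega
  · have h1 : mSet A ↑P ⊆ {j | A i j = -1} :=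
      mSet_subset A (rowSet_mem_neg A i ⟨hP.choose, hi.1 _ hP.choose_spec⟩)
        (fun j hj => hi.1 j hj)
    have h2 : mSet A ↑Q ⊆ {j | A i j = 1} :=
      mSet_subset A (rowSet_mem_pos A i ⟨hQ.choose, hi.2 _ hQ.choose_spec⟩)
        (fun j hj => hi.2 j hj)
    intro heq
    have hp : (hP.choose : Fin N) ∈ mSet A ↑P := subset_mSet A _ (by exact_mod_cast hP.choose_spec)
    have := h1 hp
    have := h2 (heq ▸ hp)
    simp only [Set.mem_setOf_eq] at *
    omega

/-- injective encoding of sets, used for an arbitrary tie-break. -/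
noncomputable def encSet : Set (Fin N) → ℕ :=
  (Countable.exists_injective_nat (Set (Fin N))).choose

lemma encSet_inj : Function.Injective (encSet (N := N)) :=
  (Countable.exists_injective_nat (Set (Fin N))).choose_spec

/-- depth value of one side of a face. -/
noncomputable def aVal (A : Fin M → Fin N → ℤ) (h : ℕ) (P : Finset (Fin N)) : ℕ :=
  if P.Nonempty then dAbove A (mSet A ↑P) else h + 1

/-- the label of a face. -/
noncomputable def nu (A : Fin M → Fin N → ℤ) (h : ℕ) (P Q : Finset (Fin N)) : ℤ :=
  if aVal A h P < aVal A h Q then 2 * (aVal A h P : ℤ) - 1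
  else if aVal A h Q < aVal A h P then -(2 * (aVal A h Q : ℤ) - 1)
  else if encSet (mSet A ↑P) ≤ encSet (mSet A ↑Q) then 2 * (aVal A h P : ℤ)
  else -(2 * (aVal A h P : ℤ))

section nuLemmas

variable {A : Fin M → Fin N → ℤ} {h : ℕ}
variable (hh : IsGreatest
      {k | ∃ c : Fin k → Set (Fin N), StrictMono c ∧ ∀ t, c t ∈ interFamily A} h)

lemma aVal_empty {P : Finset (Fin N)} (hP : ¬ P.Nonempty) : aVal A h P = h + 1 := by
  rw [aVal, if_neg hP]

lemma aVal_nonempty {P : Finset (Fin N)} (hP : P.Nonempty) :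
    aVal A h P = dAbove A (mSet A ↑P) := by
  rw [aVal, if_pos hP]

lemma nu_lt {P Q : Finset (Fin N)} (hlt : aVal A h P < aVal A h Q) :
    nu A h P Q = 2 * (aVal A h P : ℤ) - 1 := by
  rw [nu, if_pos hlt]

lemma nu_gt {P Q : Finset (Fin N)} (hgt : aVal A h Q < aVal A h P) :
    nu A h P Q = -(2 * (aVal A h Q : ℤ) - 1) := by
  rw [nu, if_neg (by omega), if_pos hgt]

lemma nu_tie_le {P Q : Finset (Fin N)} (heq : aVal A h P = aVal A h Q)
    (henc : encSet (mSet A ↑P) ≤ encSet (mSet A ↑Q)) :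
    nu A h P Q = 2 * (aVal A h P : ℤ) := by
  rw [nu, if_neg (by omega), if_neg (by omega), if_pos henc]

lemma nu_tie_gt {P Q : Finset (Fin N)} (heq : aVal A h P = aVal A h Q)
    (henc : ¬ encSet (mSet A ↑P) ≤ encSet (mSet A ↑Q)) :
    nu A h P Q = -(2 * (aVal A h P : ℤ)) := by
  rw [nu, if_neg (by omega), if_neg (by omega), if_neg henc]

include hh

lemma aVal_bounds {P Q : Finset (Fin N)} (hf : IsFace A P Q) (hP : P.Nonempty) :
    1 ≤ aVal A h P ∧ aVal A h P ≤ h := by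
  have hm : mSet A ↑P ∈ interFamily A :=
    mSet_mem A (Finset.coe_nonempty.mpr hP) (hf.exists_mem hP)
  rw [aVal_nonempty hP]
  exact ⟨one_le_dAbove A hh hm, dAbove_le A hh _⟩

lemma aVal_le_succ {Q : Finset (Fin N)} (hex : Q.Nonempty → ∃ S ∈ interFamily A, ↑Q ⊆ S) :
    aVal A h Q ≤ h + 1 := by
  by_cases hQ : Q.Nonempty
  · rw [aVal_nonempty hQ]
    exact le_trans (dAbove_le A hh _) (Nat.le_succ _)
  · rw [aVal_empty hQ]

lemma aVal_mono {P P' Q Q' : Finset (Fin N)} (hf : IsFace A P Q) (hf' : IsFace A P' Q')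
    (hPP : P ⊆ P') : aVal A h P' ≤ aVal A h P := by
  by_cases hP : P.Nonempty
  · have hP' : P'.Nonempty := hP.mono hPP
    have hm : mSet A ↑P ∈ interFamily A :=
      mSet_mem A (Finset.coe_nonempty.mpr hP) (hf.exists_mem hP)
    rw [aVal_nonempty hP, aVal_nonempty hP']
    exact dAbove_antitone A hh hm (mSet_mono A (by exact_mod_cast hPP))
  · rw [aVal_empty hP]
    exact aVal_le_succ hh (fun hQ => hf'.exists_mem hQ)

lemma aVal_tie_mSet_eq {P P' Q Q' : Finset (Fin N)} (hf : IsFace A P Q) (hf' : IsFace A P' Q')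
    (hPP : P ⊆ P') (hP : P.Nonempty) (heq : aVal A h P = aVal A h P') :
    mSet A ↑P = mSet A ↑P' := by
  have hP' : P'.Nonempty := hP.mono hPP
  have hm : mSet A ↑P ∈ interFamily A :=
    mSet_mem A (Finset.coe_nonempty.mpr hP) (hf.exists_mem hP)
  rw [aVal_nonempty hP, aVal_nonempty hP'] at heq
  exact dAbove_inj A hh hm (mSet_mono A (by exact_mod_cast hPP)) heq

/-- in a tie both sides are nonempty. -/
lemma tie_nonempty {P Q : Finset (Fin N)} (hf : IsFace A P Q)
    (heq : aVal A h P = aVal A h Q) : P.Nonempty ∧ Q.Nonempty := by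
  by_cases hP : P.Nonempty
  · refine ⟨hP, ?_⟩
    by_contra hQ
    rw [aVal_empty hQ] at heq
    have := (aVal_bounds hh hf hP).2
    omega
  · by_cases hQ : Q.Nonempty
    · rw [aVal_empty hP] at heq
      have := (aVal_bounds hh hf.symm hQ).2
      omega
    · obtain ⟨j, hj⟩ := hf.1
      rcases Finset.mem_union.1 hj with hj | hj
      · exact absurd ⟨j, hj⟩ hP
      · exact absurd ⟨j, hj⟩ hQ

lemma face_P_nonempty_of_lt {P Q : Finset (Fin N)} (hf : IsFace A P Q)
    (hlt : aVal A h P < aVal A h Q) : P.Nonempty := by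
  by_contra hP
  have h1 := aVal_empty (A := A) (h := h) hP
  have h2 := aVal_le_succ hh (fun hQ => (hf.symm.exists_mem hQ))
  omega

lemma nu_swap {P Q : Finset (Fin N)} (hf : IsFace A P Q) :
    nu A h Q P = -(nu A h P Q) := by
  rcases lt_trichotomy (aVal A h P) (aVal A h Q) with hlt | heq | hgt
  · rw [nu_gt hlt, nu_lt hlt]
  · have hne := tie_nonempty hh hf heq
    have hmne : mSet A (↑P : Set (Fin N)) ≠ mSet A ↑Q := hf.mSet_ne hne.1 hne.2
    have hence : encSet (mSet A (↑P : Set (Fin N))) ≠ encSet (mSet A ↑Q) :=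
      fun hc => hmne (encSet_inj hc)
    by_cases henc : encSet (mSet A (↑P : Set (Fin N))) ≤ encSet (mSet A ↑Q)
    · rw [nu_tie_gt heq.symm (by omega), nu_tie_le heq henc, heq]
    · rw [nu_tie_le heq.symm (by omega), nu_tie_gt heq henc, heq]
      ring
  · rw [nu_lt hgt, nu_gt hgt]
    ring

lemma nu_natAbs_bounds {P Q : Finset (Fin N)} (hf : IsFace A P Q) :
    1 ≤ (nu A h P Q).natAbs ∧ (nu A h P Q).natAbs ≤ 2 * h := by
  rcases lt_trichotomy (aVal A h P) (aVal A h Q) with hlt | heq | hgt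
  · have hb := aVal_bounds hh hf (face_P_nonempty_of_lt hh hf hlt)
    rw [nu_lt hlt]
    omega
  · have hne := tie_nonempty hh hf heq
    have hb := aVal_bounds hh hf hne.1
    by_cases henc : encSet (mSet A (↑P : Set (Fin N))) ≤ encSet (mSet A ↑Q)
    · rw [nu_tie_le heq henc]; omega
    · rw [nu_tie_gt heq henc]; omega
  · have hb := aVal_bounds hh hf.symm (face_P_nonempty_of_lt hh hf.symm hgt)
    rw [nu_gt hgt]
    omega

/-- comparable faces never carry antipodal labels. -/
lemma nu_antipodal {P Q P' Q' : Finset (Fin N)} (hf : IsFace A P Q) (hf' : IsFace A P' Q')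
    (hPP : P ⊆ P') (hQQ : Q ⊆ Q') : nu A h P' Q' ≠ -(nu A h P Q) := by
  have haP : aVal A h P' ≤ aVal A h P := aVal_mono hh hf hf' hPP
  have haQ : aVal A h Q' ≤ aVal A h Q := aVal_mono hh hf.symm hf'.symm hQQ
  rcases lt_trichotomy (aVal A h P) (aVal A h Q) with hlt | heq | hgt
  · have hbP := aVal_bounds hh hf (face_P_nonempty_of_lt hh hf hlt)
    have hbP' := aVal_bounds hh hf' ((face_P_nonempty_of_lt hh hf hlt).mono hPP)
    rw [nu_lt hlt]
    rcases lt_trichotomy (aVal A h P') (aVal A h Q') with hlt' | heq' | hgt'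
    · rw [nu_lt hlt']; omega
    · have hne' := tie_nonempty hh hf' heq'
      have hb' := aVal_bounds hh hf' hne'.1
      by_cases henc : encSet (mSet A (↑P' : Set (Fin N))) ≤ encSet (mSet A ↑Q')
      · rw [nu_tie_le heq' henc]; omega
      · rw [nu_tie_gt heq' henc]; omega
    · rw [nu_gt hgt']; omega
  · have hne := tie_nonempty hh hf heq
    have hb := aVal_bounds hh hf hne.1
    rcases lt_trichotomy (aVal A h P') (aVal A h Q') with hlt' | heq' | hgt'
    · rw [nu_lt hlt']
      by_cases henc : encSet (mSet A (↑P : Set (Fin N))) ≤ encSet (mSet A ↑Q)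
      · rw [nu_tie_le heq henc]; omega
      · rw [nu_tie_gt heq henc]; omega
    · -- tie-tie
      have hne' := tie_nonempty hh hf' heq'
      have hb' := aVal_bounds hh hf' hne'.1
      by_cases hval : aVal A h P = aVal A h P'
      · have e1 : mSet A (↑P : Set (Fin N)) = mSet A ↑P' :=
          aVal_tie_mSet_eq hh hf hf' hPP hne.1 hval
        have e2 : mSet A (↑Q : Set (Fin N)) = mSet A ↑Q' :=
          aVal_tie_mSet_eq hh hf.symm hf'.symm hQQ hne.2 (by omega)
        by_cases henc : encSet (mSet A (↑P : Set (Fin N))) ≤ encSet (mSet A ↑Q)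
        · rw [nu_tie_le heq henc, nu_tie_le heq' (by rw [← e1, ← e2]; exact henc)]
          omega
        · rw [nu_tie_gt heq henc, nu_tie_gt heq' (by rw [← e1, ← e2]; exact henc)]
          omega
      · by_cases henc : encSet (mSet A (↑P : Set (Fin N))) ≤ encSet (mSet A ↑Q) <;>
          by_cases henc' : encSet (mSet A (↑P' : Set (Fin N))) ≤ encSet (mSet A ↑Q')
        · rw [nu_tie_le heq henc, nu_tie_le heq' henc']; omega
        · rw [nu_tie_le heq henc, nu_tie_gt heq' henc']; omega
        · rw [nu_tie_gt heq henc, nu_tie_le heq' henc']; omega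
        · rw [nu_tie_gt heq henc, nu_tie_gt heq' henc']; omega
    · rw [nu_gt hgt']
      have hQ' : Q'.Nonempty := hne.2.mono hQQ
      have hb' := aVal_bounds hh hf'.symm hQ'
      by_cases henc : encSet (mSet A (↑P : Set (Fin N))) ≤ encSet (mSet A ↑Q)
      · rw [nu_tie_le heq henc]; omega
      · rw [nu_tie_gt heq henc]; omega
  · have hbQ := aVal_bounds hh hf.symm (face_P_nonempty_of_lt hh hf.symm hgt)
    have hbQ' := aVal_bounds hh hf'.symm ((face_P_nonempty_of_lt hh hf.symm hgt).mono hQQ)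
    rw [nu_gt hgt]
    rcases lt_trichotomy (aVal A h P') (aVal A h Q') with hlt' | heq' | hgt'
    · rw [nu_lt hlt']; omega
    · have hne' := tie_nonempty hh hf' heq'
      have hb' := aVal_bounds hh hf' hne'.1
      by_cases henc : encSet (mSet A (↑P' : Set (Fin N))) ≤ encSet (mSet A ↑Q')
      · rw [nu_tie_le heq' henc]; omega
      · rw [nu_tie_gt heq' henc]; omega
    · rw [nu_gt hgt']; omega

end nuLemmas

/-- the (scaled) length of the threshold interval on which the threshold face
of `x` equals `(P, Q)`. -/
noncomputable def lenF (P Q : Finset (Fin N)) (x : Fin N → ℝ) : ℝ :=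
  if hpq : (P ∪ Q).Nonempty then
    max 0 ((P ∪ Q).inf' hpq (fun j => if j ∈ P then x j else -x j)
      - Finset.fold max 0 (fun j => |x j|) (P ∪ Q)ᶜ)
  else 0

open Classical in
/-- the coefficient of face `(P,Q)` in coordinate `κ`. -/
noncomputable def coefF (A : Fin M → Fin N → ℤ) (h : ℕ) (κ : ℤ)
    (P Q : Finset (Fin N)) : ℝ :=
  if IsFace A P Q then
    (if nu A h P Q = κ + 1 then 1 else if nu A h P Q = -(κ + 1) then -1 else 0)
  else 0

/-- the equivariant map. -/
noncomputable def Fmap (A : Fin M → Fin N → ℤ) (h : ℕ) (x : Fin N → ℝ)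
    (κ : Fin (2 * h)) : ℝ :=
  ∑ τ : Finset (Fin N) × Finset (Fin N), coefF A h (κ : ℤ) τ.1 τ.2 * lenF τ.1 τ.2 x

lemma lenF_nonneg (P Q : Finset (Fin N)) (x : Fin N → ℝ) : 0 ≤ lenF P Q x := by
  rw [lenF]
  split
  · exact le_max_left _ _
  · exact le_rfl

lemma continuous_foldmax (s : Finset (Fin N)) :
    Continuous fun x : Fin N → ℝ => Finset.fold max 0 (fun j => |x j|) s := by
  induction s using Finset.induction_on with
  | empty => simpa using continuous_const
  | @insert a s ha ih =>
    have : (fun x : Fin N → ℝ => Finset.fold max 0 (fun j => |x j|) (insert a s)) =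
        fun x => max (|x a|) (Finset.fold max 0 (fun j => |x j|) s) := by
      funext x
      exact Finset.fold_insert ha
    rw [this]
    exact Continuous.max ((continuous_apply a).abs) ih

lemma continuous_inf' {s : Finset (Fin N)} (hs : s.Nonempty)
    (g : Fin N → (Fin N → ℝ) → ℝ) (hg : ∀ j, Continuous (g j)) :
    Continuous fun x => s.inf' hs (fun j => g j x) := by
  induction hs using Finset.Nonempty.cons_induction with
  | singleton a => simpa using hg a
  | cons a s ha hs ih =>
    have heq : (fun x => (Finset.cons a s ha).inf' (Finset.cons_nonempty ha)
        (fun j => g j x)) = (fun x => min (g a x) (s.inf' hs (fun j => g j x))) := by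
      funext x
      rw [Finset.inf'_cons hs]
    rw [heq]
    exact Continuous.min (hg a) ih

lemma continuous_lenF (P Q : Finset (Fin N)) : Continuous (lenF P Q) := by
  unfold lenF
  by_cases hpq : (P ∪ Q).Nonempty
  · simp only [dif_pos hpq]
    refine continuous_const.max (Continuous.sub ?_ (continuous_foldmax _))
    refine continuous_inf' hpq (fun j x => if j ∈ P then x j else -x j) (fun j => ?_)
    by_cases hj : j ∈ P
    · simp only [if_pos hj]
      exact continuous_apply j
    · simp only [if_neg hj]
      exact (continuous_apply j).neg
  · simp only [dif_neg hpq]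
    exact continuous_const

lemma continuous_Fmap (A : Fin M → Fin N → ℤ) (h : ℕ) :
    Continuous (Fmap A h) := by
  apply continuous_pi
  intro κ
  apply continuous_finset_sum
  intro τ _
  exact (continuous_const.mul (continuous_lenF τ.1 τ.2))

lemma lenF_swap_neg {A : Fin M → Fin N → ℤ} {P Q : Finset (Fin N)}
    (hf : IsFace A P Q) (x : Fin N → ℝ) : lenF Q P (-x) = lenF P Q x := by
  have hd := hf.disj
  have hun : Q ∪ P = P ∪ Q := Finset.union_comm _ _
  rw [lenF, lenF]
  by_cases hpq : (P ∪ Q).Nonempty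
  · rw [dif_pos (by rwa [hun]), dif_pos hpq]
    have h1 : (Q ∪ P).inf' (by rwa [hun]) (fun j => if j ∈ Q then (-x) j else -(-x) j)
        = (P ∪ Q).inf' hpq (fun j => if j ∈ P then x j else -x j) := by
      refine Finset.inf'_congr _ hun (fun j hj => ?_)
      by_cases hjQ : j ∈ Q
      · rw [if_pos hjQ, if_neg (Finset.disjoint_right.1 hd hjQ), Pi.neg_apply]
      · have hjP : j ∈ P := by
          rcases Finset.mem_union.1 hj with h1 | h1
          · exact absurd h1 hjQ
          · exact h1
        rw [if_neg hjQ, if_pos hjP, Pi.neg_apply, neg_neg]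
    have h2 : Finset.fold max 0 (fun j => |(-x) j|) (Q ∪ P)ᶜ
        = Finset.fold max 0 (fun j => |x j|) (P ∪ Q)ᶜ := by
      rw [hun]
      congr 1
      funext j
      rw [Pi.neg_apply, abs_neg]
    rw [h1, h2]
  · rw [dif_neg (by rwa [hun]), dif_neg hpq]

section withHeight

variable {A : Fin M → Fin N → ℤ} {h : ℕ}
variable (hh : IsGreatest
      {k | ∃ c : Fin k → Set (Fin N), StrictMono c ∧ ∀ t, c t ∈ interFamily A} h)

include hh

lemma coefF_swap (κ : ℤ) (hκ : 0 ≤ κ) (P Q : Finset (Fin N)) :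
    coefF A h κ Q P = -(coefF A h κ P Q) := by
  by_cases hf : IsFace A P Q
  · rw [coefF, coefF, if_pos hf, if_pos hf.symm, nu_swap hh hf]
    by_cases h1 : nu A h P Q = κ + 1
    · rw [if_pos h1, if_neg (by omega), if_pos (by omega)]
      try norm_num
    · rw [if_neg h1]
      by_cases h2 : nu A h P Q = -(κ + 1)
      · rw [if_pos h2, if_pos (by omega)]
        try norm_num
      · rw [if_neg h2, if_neg (by omega), if_neg (by omega)]
        try norm_num
  · rw [coefF, coefF, if_neg hf, if_neg (fun hc => hf hc.symm)]
    norm_num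

lemma Fmap_neg (x : Fin N → ℝ) : Fmap A h (-x) = -(Fmap A h x) := by
  funext κ
  rw [Pi.neg_apply, Fmap, Fmap, ← Finset.sum_neg_distrib]
  refine Fintype.sum_equiv (Equiv.prodComm _ _) _ _ (fun τ => ?_)
  simp only [Equiv.prodComm_apply, Prod.snd_swap, Prod.fst_swap]
  by_cases hf : IsFace A τ.1 τ.2
  · rw [lenF_swap_neg hf.symm, coefF_swap hh _ (by positivity) τ.2 τ.1]
    ring
  · have c1 : coefF A h (κ : ℤ) τ.1 τ.2 = 0 := by rw [coefF, if_neg hf]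
    have c2 : coefF A h (κ : ℤ) τ.2 τ.1 = 0 := by
      rw [coefF, if_neg (fun hc => hf hc.symm)]
    rw [c1, c2]
    ring

end withHeight

/-- membership of the convex hull forces the sign conditions and the affine
normalisation. -/
lemma rowSimplex_subset (A : Fin M → Fin N → ℤ) (i : Fin M) :
    rowSimplex A i ⊆ {y : Fin N → ℝ | (∀ j, 0 < y j → A i j = 1) ∧
      (∀ j, y j < 0 → A i j = -1) ∧ ∑ j, (A i j : ℝ) * y j = 1} := by
  apply convexHull_min
  · rintro v (⟨j, hj, rfl⟩ | ⟨j, hj, rfl⟩)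
    · refine ⟨fun k hk => ?_, fun k hk => ?_, ?_⟩
      · rcases eq_or_ne k j with rfl | hkj
        · exact hj
        · rw [Pi.single_apply, if_neg hkj] at hk
          norm_num at hk
      · rw [Pi.single_apply] at hk
        split at hk <;> norm_num at hk
      · rw [Finset.sum_eq_single j]
        · rw [Pi.single_apply, if_pos rfl, hj]
          norm_num
        · intro k _ hkj
          rw [Pi.single_apply, if_neg hkj, mul_zero]
        · intro hj'
          exact absurd (Finset.mem_univ j) hj'
    · refine ⟨fun k hk => ?_, fun k hk => ?_, ?_⟩
      · rw [Pi.neg_apply, Pi.single_apply] at hk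
        split at hk <;> norm_num at hk
      · rcases eq_or_ne k j with rfl | hkj
        · exact hj
        · rw [Pi.neg_apply, Pi.single_apply, if_neg hkj] at hk
          norm_num at hk
      · rw [Finset.sum_eq_single j]
        · rw [Pi.neg_apply, Pi.single_apply, if_pos rfl, hj]
          norm_num
        · intro k _ hkj
          rw [Pi.neg_apply, Pi.single_apply, if_neg hkj]
          norm_num
        · intro hj'
          exact absurd (Finset.mem_univ j) hj'
  · rintro y ⟨hy1, hy2, hy3⟩ z ⟨hz1, hz2, hz3⟩ a b ha hb hab
    refine ⟨fun j hj => ?_, fun j hj => ?_, ?_⟩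
    · simp only [Pi.add_apply, Pi.smul_apply, smul_eq_mul] at hj
      by_contra hne
      have hyj : y j ≤ 0 := by
        by_contra hy
        exact hne (hy1 j (by linarith))
      have hzj : z j ≤ 0 := by
        by_contra hz
        exact hne (hz1 j (by linarith))
      nlinarith
    · simp only [Pi.add_apply, Pi.smul_apply, smul_eq_mul] at hj
      by_contra hne
      have hyj : 0 ≤ y j := by
        by_contra hy
        exact hne (hy2 j (by linarith))
      have hzj : 0 ≤ z j := by
        by_contra hz
        exact hne (hz2 j (by linarith))
      nlinarith
    · have : ∀ j ∈ Finset.univ, (A i j : ℝ) * (a • y + b • z) j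
          = a * ((A i j : ℝ) * y j) + b * ((A i j : ℝ) * z j) := by
        intro j _
        simp only [Pi.add_apply, Pi.smul_apply, smul_eq_mul]
        ring
      rw [Finset.sum_congr rfl this, Finset.sum_add_distrib, ← Finset.mul_sum,
        ← Finset.mul_sum, hy3, hz3]
      linarith

section keyLemma

variable {A : Fin M → Fin N → ℤ} {h : ℕ}
variable (hh : IsGreatest
      {k | ∃ c : Fin k → Set (Fin N), StrictMono c ∧ ∀ t, c t ∈ interFamily A} h)

include hh

/-- the heart: `Fmap` does not vanish on a row simplex. -/
lemma Fmap_ne_zero {i : Fin M} {x : Fin N → ℝ} (hx : x ∈ rowSimplex A i) :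
    Fmap A h x ≠ 0 := by
  classical
  obtain ⟨c1, c2, c3⟩ := rowSimplex_subset A i hx
  -- the universe is nonempty
  have hu : (Finset.univ : Finset (Fin N)).Nonempty := by
    rcases (Finset.univ : Finset (Fin N)).eq_empty_or_nonempty with he | hne
    · rw [he, Finset.sum_empty] at c3
      norm_num at c3
    · exact hne
  set T : ℝ := Finset.univ.sup' hu (fun j => |x j|) with hT
  have hTle : ∀ j, |x j| ≤ T := by
    intro j
    rw [hT]
    exact Finset.le_sup' (fun j : Fin N => |x j|) (Finset.mem_univ j)
  have hT0 : 0 < T := by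
    by_contra hc
    push_neg at hc
    have hx0 : ∀ j ∈ Finset.univ, (A i j : ℝ) * x j = 0 := by
      intro j _
      have : |x j| ≤ 0 := le_trans (hTle j) hc
      have : x j = 0 := abs_eq_zero.1 (le_antisymm this (abs_nonneg _))
      rw [this, mul_zero]
    rw [Finset.sum_congr rfl hx0, Finset.sum_const_zero] at c3
    norm_num at c3
  set P₁ : Finset (Fin N) := Finset.univ.filter (fun j => x j = T) with hP₁
  set Q₁ : Finset (Fin N) := Finset.univ.filter (fun j => x j = -T) with hQ₁
  have hmemP₁ : ∀ j, j ∈ P₁ ↔ x j = T := by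
    intro j; simp [hP₁]
  have hmemQ₁ : ∀ j, j ∈ Q₁ ↔ x j = -T := by
    intro j; simp [hQ₁]
  have hne₁ : (P₁ ∪ Q₁).Nonempty := by
    obtain ⟨j0, -, hj0⟩ := Finset.exists_mem_eq_sup' hu (fun j => |x j|)
    rcases abs_eq hT0.le |>.1 hj0.symm with hj | hj
    · exact ⟨j0, Finset.mem_union.2 (Or.inl ((hmemP₁ j0).2 hj))⟩
    · exact ⟨j0, Finset.mem_union.2 (Or.inr ((hmemQ₁ j0).2 hj))⟩
  have hface₁ : IsFace A P₁ Q₁ := by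
    refine ⟨hne₁, i, Or.inl ⟨fun j hj => ?_, fun j hj => ?_⟩⟩
    · exact c1 j (by rw [(hmemP₁ j).1 hj]; exact hT0)
    · exact c2 j (by rw [(hmemQ₁ j).1 hj]; linarith)
  -- the top face has positive length
  have hlen₁ : 0 < lenF P₁ Q₁ x := by
    rw [lenF, dif_pos hne₁]
    have hg : (P₁ ∪ Q₁).inf' hne₁ (fun j => if j ∈ P₁ then x j else -x j) = T := by
      have hval : ∀ j ∈ P₁ ∪ Q₁, (if j ∈ P₁ then x j else -x j) = T := by
        intro j hj
        by_cases hjP : j ∈ P₁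
        · rw [if_pos hjP]
          exact (hmemP₁ j).1 hjP
        · have hjQ : j ∈ Q₁ := by
            rcases Finset.mem_union.1 hj with h1 | h1
            · exact absurd h1 hjP
            · exact h1
          rw [if_neg hjP, (hmemQ₁ j).1 hjQ, neg_neg]
      obtain ⟨j0, hj0⟩ := hne₁
      refine le_antisymm (le_trans (Finset.inf'_le _ hj0) (le_of_eq (hval j0 hj0)))
        (Finset.le_inf' _ _ fun j hj => le_of_eq (hval j hj).symm)
    have hG : Finset.fold max 0 (fun j => |x j|) (P₁ ∪ Q₁)ᶜ < T := by
      refine (Finset.fold_max_lt _).2 ⟨hT0, fun j hj => ?_⟩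
      refine lt_of_le_of_ne (hTle j) (fun hc => ?_)
      rcases (abs_eq hT0.le).1 hc with hj' | hj'
      · exact (Finset.mem_compl.1 hj)
          (Finset.mem_union.2 (Or.inl ((hmemP₁ j).2 hj')))
      · exact (Finset.mem_compl.1 hj)
          (Finset.mem_union.2 (Or.inr ((hmemQ₁ j).2 hj')))
    rw [hg]
    exact lt_max_iff.2 (Or.inr (by linarith))
  -- every face with positive length contains the top face
  have hcontain : ∀ P Q : Finset (Fin N), IsFace A P Q → 0 < lenF P Q x →
      P₁ ⊆ P ∧ Q₁ ⊆ Q := by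
    intro P Q hf hl
    rw [lenF] at hl
    by_cases hpq : (P ∪ Q).Nonempty
    · rw [dif_pos hpq] at hl
      set g := (P ∪ Q).inf' hpq (fun j => if j ∈ P then x j else -x j) with hgdef
      set G := Finset.fold max 0 (fun j => |x j|) (P ∪ Q)ᶜ with hGdef
      have hGg : G < g := by
        rcases le_or_gt g G with hle | hlt
        · rw [max_eq_left (by linarith)] at hl
          norm_num at hl
        · exact hlt
      have hG0 : 0 ≤ G := ((Finset.fold_max_le _).mp le_rfl).1
      have hgT : g ≤ T := by
        obtain ⟨k, hk⟩ := hpq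
        refine le_trans (Finset.inf'_le _ hk) (le_trans ?_ (hTle k))
        by_cases hkP : k ∈ P
        · rw [if_pos hkP]
          exact le_abs_self _
        · rw [if_neg hkP]
          exact neg_le_abs _
      constructor
      · intro j hj
        have hxj : x j = T := (hmemP₁ j).1 hj
        by_cases hjm : j ∈ P ∪ Q
        · rcases Finset.mem_union.1 hjm with hjP | hjQ
          · exact hjP
          · exfalso
            have hjnP : j ∉ P := Finset.disjoint_right.1 hf.disj hjQ
            have : g ≤ -x j := by
              refine le_trans (Finset.inf'_le _ hjm) ?_
              rw [if_neg hjnP]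
            rw [hxj] at this
            linarith
        · exfalso
          have : |x j| ≤ G := by
            rw [hGdef]
            exact (Finset.le_fold_max _).2 (Or.inr ⟨j, Finset.mem_compl.2 hjm, le_rfl⟩)
          rw [hxj, abs_of_pos hT0] at this
          linarith
      · intro j hj
        have hxj : x j = -T := (hmemQ₁ j).1 hj
        by_cases hjm : j ∈ P ∪ Q
        · rcases Finset.mem_union.1 hjm with hjP | hjQ
          · exfalso
            have : g ≤ x j := by
              refine le_trans (Finset.inf'_le _ hjm) ?_
              rw [if_pos hjP]
            rw [hxj] at this
            linarith
          · exact hjQ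
        · exfalso
          have : |x j| ≤ G := by
            rw [hGdef]
            exact (Finset.le_fold_max _).2 (Or.inr ⟨j, Finset.mem_compl.2 hjm, le_rfl⟩)
          rw [hxj, abs_neg, abs_of_pos hT0] at this
          linarith
    · rw [dif_neg hpq] at hl
      norm_num at hl
  -- the distinguished coordinate
  have hbounds := nu_natAbs_bounds hh hface₁
  set v : ℤ := nu A h P₁ Q₁ with hv
  have hκlt : (nu A h P₁ Q₁).natAbs - 1 < 2 * h := by omega
  set κ : Fin (2 * h) := ⟨(nu A h P₁ Q₁).natAbs - 1, hκlt⟩ with hκ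
  have hκv : ((κ : ℕ) : ℤ) + 1 = v.natAbs := by
    have hκval : (κ : ℕ) = (nu A h P₁ Q₁).natAbs - 1 := rfl
    omega
  intro hzero
  have h0κ : IdxProof.Fmap A h x κ = 0 := by rw [hzero]; rfl
  -- key cancellation property
  have hterm : ∀ P Q : Finset (Fin N), coefF A h (κ : ℤ) P Q ≠ 0 → 0 < lenF P Q x →
      (IsFace A P Q ∧ (nu A h P Q = v ∨ nu A h P Q = -v)) ∧ nu A h P Q ≠ -v := by
    intro P Q hc hl
    have hf : IsFace A P Q := by
      by_contra hnf
      exact hc (by rw [coefF, if_neg hnf])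
    have hνor : nu A h P Q = (κ : ℤ) + 1 ∨ nu A h P Q = -((κ : ℤ) + 1) := by
      by_contra hor
      push_neg at hor
      exact hc (by rw [coefF, if_pos hf, if_neg hor.1, if_neg hor.2])
    obtain ⟨hsubP, hsubQ⟩ := hcontain P Q hf hl
    have hanti : nu A h P Q ≠ -v := nu_antipodal hh hface₁ hf hsubP hsubQ
    refine ⟨⟨hf, ?_⟩, hanti⟩
    rcases hνor with h1 | h1 <;> rw [h1] <;> omega
  -- conclude by sign analysis
  rcases lt_trichotomy v 0 with hvneg | hv0 | hvpos
  · -- every term is ≤ 0 and the top term is < 0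
    have hsum : ∀ τ ∈ (Finset.univ : Finset (Finset (Fin N) × Finset (Fin N))),
        0 ≤ -(coefF A h (κ : ℤ) τ.1 τ.2 * lenF τ.1 τ.2 x) := by
      intro τ _
      rcases eq_or_ne (coefF A h (κ : ℤ) τ.1 τ.2) 0 with hc | hc
      · rw [hc, zero_mul, neg_zero]
      · rcases (lenF_nonneg τ.1 τ.2 x).lt_or_eq with hl | hl
        · obtain ⟨⟨hf, hνor⟩, hanti⟩ := hterm τ.1 τ.2 hc hl
          have hν : nu A h τ.1 τ.2 = v := by
            rcases hνor with h1 | h1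
            · exact h1
            · exact absurd (by omega : nu A h τ.1 τ.2 = -v) hanti
          have : coefF A h (κ : ℤ) τ.1 τ.2 = -1 := by
            rw [coefF, if_pos hf, if_neg (by omega), if_pos (by rw [hν]; omega)]
          rw [this]
          nlinarith
        · rw [← hl, mul_zero, neg_zero]
    have htop : 0 < -(coefF A h (κ : ℤ) P₁ Q₁ * lenF P₁ Q₁ x) := by
      have : coefF A h (κ : ℤ) P₁ Q₁ = -1 := by
        rw [coefF, if_pos hface₁, if_neg (by omega), if_pos (by omega)]
      rw [this]
      nlinarith
    have : 0 < ∑ τ : Finset (Fin N) × Finset (Fin N),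
        -(coefF A h (κ : ℤ) τ.1 τ.2 * lenF τ.1 τ.2 x) :=
      Finset.sum_pos' hsum ⟨(P₁, Q₁), Finset.mem_univ _, htop⟩
    rw [Finset.sum_neg_distrib] at this
    rw [IdxProof.Fmap] at h0κ
    linarith
  · omega
  · have hsum : ∀ τ ∈ (Finset.univ : Finset (Finset (Fin N) × Finset (Fin N))),
        0 ≤ coefF A h (κ : ℤ) τ.1 τ.2 * lenF τ.1 τ.2 x := by
      intro τ _
      rcases eq_or_ne (coefF A h (κ : ℤ) τ.1 τ.2) 0 with hc | hc
      · rw [hc, zero_mul]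
      · rcases (lenF_nonneg τ.1 τ.2 x).lt_or_eq with hl | hl
        · obtain ⟨⟨hf, hνor⟩, hanti⟩ := hterm τ.1 τ.2 hc hl
          have hν : nu A h τ.1 τ.2 = v := by
            rcases hνor with h1 | h1
            · exact h1
            · exact absurd (by omega : nu A h τ.1 τ.2 = -v) hanti
          have : coefF A h (κ : ℤ) τ.1 τ.2 = 1 := by
            rw [coefF, if_pos hf, if_pos (by rw [hν]; omega)]
          rw [this]
          nlinarith
        · rw [← hl, mul_zero]
    have htop : 0 < coefF A h (κ : ℤ) P₁ Q₁ * lenF P₁ Q₁ x := by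
      have : coefF A h (κ : ℤ) P₁ Q₁ = 1 := by
        rw [coefF, if_pos hface₁, if_pos (by omega)]
      rw [this]
      nlinarith
    have : 0 < ∑ τ : Finset (Fin N) × Finset (Fin N),
        coefF A h (κ : ℤ) τ.1 τ.2 * lenF τ.1 τ.2 x :=
      Finset.sum_pos' hsum ⟨(P₁, Q₁), Finset.mem_univ _, htop⟩
    rw [IdxProof.Fmap] at h0κ
    linarith

end keyLemma

end IdxProof


/-- Chain height bounds the ℤ₂-index: if `h` is the height of `A` (the maximum
length of a strictly increasing chain in `I(A)`), then there is a
ℤ₂-equivariant continuous map `|S(A)| → ℝ^{2h} \ {0}`, i.e.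
`ind_{ℤ₂}(S(A)) ≤ 2·h(A) - 1`. -/
theorem index_le_two_height {M N : ℕ} (A : Fin M → Fin N → ℤ)
    (hA : ∀ i j, A i j = -1 ∨ A i j = 0 ∨ A i j = 1)
    (hne : ∃ i j, A i j ≠ 0) (h : ℕ)
    (hheight : IsGreatest
      {k | ∃ c : Fin k → Set (Fin N), StrictMono c ∧ ∀ t, c t ∈ interFamily A}
      h) :
    ∃ f : (Fin N → ℝ) → (Fin (2 * h) → ℝ),
      ContinuousOn f (signComplexReal A) ∧
      (∀ x ∈ signComplexReal A, f x ≠ 0) ∧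
      (∀ x, x ∈ signComplexReal A → -x ∈ signComplexReal A → f (-x) = -f x) := by
  classical
  refine ⟨IdxProof.Fmap A h, (IdxProof.continuous_Fmap A h).continuousOn, ?_, ?_⟩
  · intro x hx
    rw [signComplexReal, Set.mem_iUnion] at hx
    obtain ⟨i, hx⟩ := hx
    rcases hx with hx | hx
    · exact IdxProof.Fmap_ne_zero hheight hx
    · have hx' : -x ∈ rowSimplex A i := Set.mem_neg.1 hx
      intro h0
      apply IdxProof.Fmap_ne_zero hheight hx'
      rw [IdxProof.Fmap_neg hheight, h0, neg_zero]
  · intro x _ _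
    exact IdxProof.Fmap_neg hheight x
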